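/- For integers ℓ ≥ 1 and m ≥ 2, the binomial coefficient C(ℓm, ℓ) satisfies C(ℓm, ℓ) ≥ m^(m(ℓ−1)+1) / (√ℓ · (m−1)^((m−1)(ℓ−1))). -/

import Mathlib

open Real Stirling

lemma log_ge_aux (x : ℝ) (hx : 0 ≤ x) : 2*x/(2+x) ≤ Real.log (1+x) := by
  have hder : ∀ t : ℝ, 0 ≤ t → HasDerivAt (fun t => Real.log (1+t) - 2*t/(2+t))
      (1/(1+t) - 4/(2+t)^2) t := by
    intro t ht
    have hne1 : (1+t) ≠ 0 := by positivity
    have hne2 : (2+t) ≠ 0 := by positivity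
    have h1 : HasDerivAt (fun t : ℝ => 1+t) 1 t := by simpa using (hasDerivAt_id t).const_add 1
    have h2 : HasDerivAt (fun t : ℝ => Real.log (1+t)) (1/(1+t)) t := by
      simpa using h1.log hne1
    have h3 : HasDerivAt (fun t : ℝ => 2*t) 2 t := by simpa using (hasDerivAt_id t).const_mul 2
    have h4 : HasDerivAt (fun t : ℝ => 2+t) 1 t := by simpa using (hasDerivAt_id t).const_add 2
    have h5 : HasDerivAt (fun t : ℝ => 2*t/(2+t)) ((2*(2+t) - 2*t*1)/(2+t)^2) t :=
      h3.div h4 hne2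
    rw [show (1/(1+t) - 4/(2+t)^2) = 1/(1+t) - (2*(2+t) - 2*t*1)/(2+t)^2 by ring]
    exact h2.sub h5
  have key : MonotoneOn (fun t : ℝ => Real.log (1+t) - 2*t/(2+t)) (Set.Ici 0) := by
    apply monotoneOn_of_deriv_nonneg (convex_Ici 0)
    · exact fun t ht => ((hder t ht).continuousAt).continuousWithinAt
    · intro t ht
      rw [interior_Ici] at ht
      exact ((hder t (le_of_lt ht)).differentiableAt).differentiableWithinAt
    · intro t ht
      rw [interior_Ici] at ht
      have ht' : (0:ℝ) < t := ht
      rw [(hder t (le_of_lt ht')).deriv, sub_nonneg,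
        div_le_div_iff₀ (by positivity) (by positivity)]
      nlinarith [sq_nonneg t]
  have h := key Set.self_mem_Ici (Set.mem_Ici.mpr hx) hx
  simp only [add_zero, mul_zero, zero_div, Real.log_one, sub_zero, zero_sub] at h
  linarith


lemma epow_le (n : ℕ) (hn : 1 ≤ n) :
    Real.exp 1 * (Real.sqrt n * (n:ℝ)^n) ≤ Real.sqrt ((n:ℝ)+1) * ((n:ℝ)+1)^n := by
  have hn0 : (0:ℝ) < n := by exact_mod_cast hn
  have hlog : 2/(2*(n:ℝ)+1) ≤ Real.log ((n:ℝ)+1) - Real.log n := by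
    have h := log_ge_aux (1/(n:ℝ)) (by positivity)
    have e1 : Real.log (1 + 1/(n:ℝ)) = Real.log ((n:ℝ)+1) - Real.log n := by
      rw [show (1 : ℝ) + 1/(n:ℝ) = ((n:ℝ)+1)/n by field_simp, Real.log_div (by positivity) (by positivity)]
    have e2 : 2*(1/(n:ℝ))/(2+1/(n:ℝ)) = 2/(2*(n:ℝ)+1) := by
      rw [div_eq_div_iff (by positivity) (by positivity)]
      field_simp
    rw [e1, e2] at h
    exact h
  rw [← Real.log_le_log_iff (by positivity) (by positivity),
    Real.log_mul (by positivity) (by positivity), Real.log_mul (by positivity) (by positivity),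
    Real.log_mul (by positivity) (by positivity),
    Real.log_exp, Real.log_sqrt (le_of_lt hn0), Real.log_sqrt (by positivity),
    Real.log_pow, Real.log_pow]
  have h2 : ((n:ℝ) + 1/2) * (2/(2*(n:ℝ)+1)) = 1 := by
    field_simp
  nlinarith [hlog, hn0]

lemma fact_eq_stirling (n : ℕ) (hn : 1 ≤ n) :
    (Nat.factorial n : ℝ) = stirlingSeq n * (Real.sqrt (2*(n:ℝ)) * ((n:ℝ)/Real.exp 1)^n) := by
  have hn0 : (0:ℝ) < n := by exact_mod_cast hn
  have h1 : (0:ℝ) < Real.sqrt (2*(n:ℝ)) := Real.sqrt_pos.mpr (by positivity)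
  have h2 : (0:ℝ) < ((n:ℝ)/Real.exp 1)^n := by positivity
  rw [stirlingSeq, div_mul_cancel₀]
  positivity

lemma stirling_pos (n : ℕ) (hn : 1 ≤ n) : 0 < stirlingSeq n := by
  obtain ⟨a, rfl⟩ : ∃ a, n = a + 1 := ⟨n-1, by omega⟩
  exact stirlingSeq'_pos a

lemma stirling_anti {a b : ℕ} (ha : 1 ≤ a) (hab : a ≤ b) : stirlingSeq b ≤ stirlingSeq a := by
  obtain ⟨a', rfl⟩ : ∃ x, a = x + 1 := ⟨a-1, by omega⟩
  obtain ⟨b', rfl⟩ : ∃ x, b = x + 1 := ⟨b-1, by omega⟩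
  exact stirlingSeq'_antitone (by omega)

lemma sqrt_pi_le_stirling (n : ℕ) (hn : 1 ≤ n) : Real.sqrt π ≤ stirlingSeq n := by
  obtain ⟨a, rfl⟩ : ∃ x, n = x + 1 := ⟨n-1, by omega⟩
  have h : Filter.Tendsto (stirlingSeq ∘ Nat.succ) Filter.atTop (nhds (Real.sqrt π)) :=
    tendsto_stirlingSeq_sqrt_pi.comp (Filter.tendsto_add_atTop_nat 1)
  exact stirlingSeq'_antitone.le_of_tendsto h a

lemma sqrt_pi_ge : (1.7724:ℝ) ≤ Real.sqrt π := by
  have h := Real.sq_sqrt (le_of_lt Real.pi_pos)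
  have h2 := Real.sqrt_nonneg π
  nlinarith [Real.pi_gt_d6]

lemma sqrt_two_le : Real.sqrt 2 ≤ 1.4142136 := by
  have h := Real.sq_sqrt (by norm_num : (0:ℝ) ≤ 2)
  have h2 := Real.sqrt_nonneg 2
  nlinarith

lemma exp_sq_le : Real.exp 1^2 ≤ 7.3890561 := by
  nlinarith [Real.exp_one_lt_d9, Real.exp_pos 1]

lemma exp_four_le : Real.exp 1^4 ≤ 54.5981501 := by
  nlinarith [exp_sq_le, Real.exp_pos 1, pow_pos (Real.exp_pos 1) 2]

lemma s2_eq : stirlingSeq 2 = Real.exp 1^2/4 := by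
  rw [stirlingSeq]
  have h4 : Real.sqrt (2*((2:ℕ):ℝ)) = 2 := by
    rw [show (2*((2:ℕ):ℝ)) = 2^2 by norm_num, Real.sqrt_sq (by norm_num)]
  rw [h4]
  have he : Real.exp 1 ≠ 0 := (Real.exp_pos 1).ne'
  norm_num [Nat.factorial]
  field_simp
  rw [show Real.exp 2 = Real.exp 1 ^ 2 by rw [← Real.exp_nat_mul]; norm_num]
  ring

lemma s2_le : stirlingSeq 2 ≤ 1.84726403 := by
  rw [s2_eq]
  nlinarith [exp_sq_le]

lemma s4_le : stirlingSeq 4 ≤ 1.8097 := by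
  have h8 : (2.8284271:ℝ) ≤ Real.sqrt 8 := by
    have h := Real.sq_sqrt (by norm_num : (0:ℝ) ≤ 8)
    have h2 := Real.sqrt_nonneg (8:ℝ)
    nlinarith
  have h8' : (0:ℝ) < Real.sqrt 8 := by nlinarith
  have he : (0:ℝ) < Real.exp 1 := Real.exp_pos 1
  have hs4 : stirlingSeq 4 = 3*Real.exp 1^4/(32*Real.sqrt 8) := by
    rw [stirlingSeq]
    rw [show (2*((4:ℕ):ℝ)) = 8 by norm_num]
    norm_num [Nat.factorial]
    field_simp
    rw [show Real.exp 4 = Real.exp 1 ^ 4 by rw [← Real.exp_nat_mul]; norm_num]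
    ring
  rw [hs4, div_le_iff₀ (by positivity)]
  nlinarith [exp_four_le, h8, Real.sqrt_nonneg (8:ℝ)]


lemma main_aux (l m : ℕ) (S₁ S₂ : ℝ) (hl : 2 ≤ l) (hm : 2 ≤ m)
    (hS₁ : stirlingSeq l ≤ S₁) (hS₂ : stirlingSeq (l*(m-1)) ≤ S₂)
    (hS : S₁*S₂*Real.sqrt 2*Real.sqrt ((m:ℝ)-1)*((m:ℝ)-1)^(m-1)
        ≤ Real.sqrt π * Real.sqrt (m:ℝ) * (m:ℝ)^(m-1)) :
    (Nat.choose (l * m) l : ℝ)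
      ≥ (m : ℝ) ^ (m * (l - 1) + 1) /
        (Real.sqrt l * ((m : ℝ) - 1) ^ ((m - 1) * (l - 1))) := by
  obtain ⟨k, hk_def⟩ : ∃ k, k = l*(m-1) := ⟨_, rfl⟩
  rw [← hk_def] at hS₂
  have hk2 : 2 ≤ k := by
    rw [hk_def]
    calc 2 = 2*1 := by norm_num
    _ ≤ l*(m-1) := Nat.mul_le_mul hl (by omega)
  have hlmk : l*m = l + k := by
    rw [hk_def]
    cases m with
    | zero => omega
    | succ b => simp [Nat.mul_succ]; omega
  have hexp1 : l*m = (m*(l-1)+1) + (m-1) := by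
    obtain ⟨a, rfl⟩ : ∃ a, l = a+2 := ⟨l-2, by omega⟩
    obtain ⟨b, rfl⟩ : ∃ b, m = b+2 := ⟨m-2, by omega⟩
    simp
    ring
  have hexp2 : k = (m-1)*(l-1) + (m-1) := by
    rw [hk_def]
    obtain ⟨a, rfl⟩ : ∃ a, l = a+2 := ⟨l-2, by omega⟩
    obtain ⟨b, rfl⟩ : ∃ b, m = b+2 := ⟨m-2, by omega⟩
    simp
    ring
  have hE : (0:ℝ) < Real.exp 1 := Real.exp_pos 1
  have hl0 : (0:ℝ) < l := by exact_mod_cast (by omega : 0 < l)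
  have hm0 : (0:ℝ) < m := by exact_mod_cast (by omega : 0 < m)
  have hk0 : (0:ℝ) < k := by exact_mod_cast (by omega : 0 < k)
  have hm1R : (1:ℝ) ≤ (m:ℝ) - 1 := by
    have : (2:ℝ) ≤ m := by exact_mod_cast hm
    linarith
  have hm1pos : (0:ℝ) < (m:ℝ) - 1 := by linarith
  have hkR : (k:ℝ) = (l:ℝ)*((m:ℝ)-1) := by
    rw [hk_def]
    push_cast [Nat.cast_sub (by omega : 1 ≤ m)]
    ring
  -- sqrt expansions
  have e1 : Real.sqrt (2*((l*m : ℕ):ℝ)) = Real.sqrt 2 * Real.sqrt l * Real.sqrt m := by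
    push_cast
    rw [Real.sqrt_mul (by norm_num : (0:ℝ) ≤ 2), Real.sqrt_mul (le_of_lt hl0)]
    ring
  have e2 : Real.sqrt (2*(l:ℝ)) = Real.sqrt 2 * Real.sqrt l :=
    Real.sqrt_mul (by norm_num : (0:ℝ) ≤ 2) _
  have e3 : Real.sqrt (2*(k:ℝ)) = Real.sqrt 2 * Real.sqrt l * Real.sqrt ((m:ℝ)-1) := by
    rw [hkR, Real.sqrt_mul (by norm_num : (0:ℝ) ≤ 2), Real.sqrt_mul (le_of_lt hl0)]
    ring
  -- positivity of D-terms and constants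
  have hsl : (0:ℝ) < Real.sqrt l := Real.sqrt_pos.mpr hl0
  have hsm : (0:ℝ) < Real.sqrt m := Real.sqrt_pos.mpr hm0
  have hsm1 : (0:ℝ) < Real.sqrt ((m:ℝ)-1) := Real.sqrt_pos.mpr hm1pos
  have hs2 : (0:ℝ) < Real.sqrt 2 := Real.sqrt_pos.mpr (by norm_num)
  have hDl : (0:ℝ) < Real.sqrt (2*(l:ℝ)) * ((l:ℝ)/Real.exp 1)^l := by
    rw [e2]; positivity
  have hDk : (0:ℝ) < Real.sqrt (2*(k:ℝ)) * ((k:ℝ)/Real.exp 1)^k := by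
    rw [e3]
    have : (0:ℝ) < (k:ℝ)/Real.exp 1 := by positivity
    positivity
  have hS₁0 : (0:ℝ) < S₁ := lt_of_lt_of_le (stirling_pos l (by omega)) hS₁
  have hS₂0 : (0:ℝ) < S₂ := lt_of_lt_of_le (stirling_pos k (by omega)) hS₂
  -- factorial bounds
  have Fl : (Nat.factorial l : ℝ) ≤ S₁ * (Real.sqrt (2*(l:ℝ)) * ((l:ℝ)/Real.exp 1)^l) := by
    rw [fact_eq_stirling l (by omega)]
    exact mul_le_mul_of_nonneg_right hS₁ (le_of_lt hDl)
  have Fk : (Nat.factorial k : ℝ) ≤ S₂ * (Real.sqrt (2*(k:ℝ)) * ((k:ℝ)/Real.exp 1)^k) := by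
    rw [fact_eq_stirling k (by omega)]
    exact mul_le_mul_of_nonneg_right hS₂ (le_of_lt hDk)
  have hcastlm : ((l*m : ℕ):ℝ) = (l:ℝ)*(m:ℝ) := by push_cast; ring
  have hDlm : (0:ℝ) < Real.sqrt (2*((l*m:ℕ):ℝ)) * (((l*m:ℕ):ℝ)/Real.exp 1)^(l*m) := by
    rw [e1, hcastlm]
    have : (0:ℝ) < (l:ℝ)*(m:ℝ)/Real.exp 1 := by positivity
    positivity
  have Flm : Real.sqrt π * (Real.sqrt (2*((l*m:ℕ):ℝ)) * (((l*m:ℕ):ℝ)/Real.exp 1)^(l*m))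
      ≤ (Nat.factorial (l*m) : ℝ) := by
    rw [fact_eq_stirling (l*m) (by omega)]
    exact mul_le_mul_of_nonneg_right (sqrt_pi_le_stirling (l*m) (by omega)) (le_of_lt hDlm)
  -- choose as factorials
  have hfl0 : (0:ℝ) < (Nat.factorial l : ℝ) := by exact_mod_cast (Nat.factorial_pos l)
  have hfk0 : (0:ℝ) < (Nat.factorial k : ℝ) := by exact_mod_cast (Nat.factorial_pos k)
  have hchoose : (Nat.choose (l*m) l : ℝ)
      = (Nat.factorial (l*m) : ℝ)/((Nat.factorial l : ℝ)*(Nat.factorial k : ℝ)) := by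
    rw [Nat.cast_choose ℝ (by omega : l ≤ l*m), show l*m - l = k from by rw [hlmk]; omega]
  -- the power split identity
  have hsplit : (((l:ℝ)*(m:ℝ))/Real.exp 1)^(l*m) * ((m:ℝ)-1)^k
      = ((l:ℝ)/Real.exp 1)^l*((k:ℝ)/Real.exp 1)^k*((m:ℝ)^(m*(l-1)+1)*(m:ℝ)^(m-1)) := by
    have h1 : (((l:ℝ)*(m:ℝ))/Real.exp 1)^l = ((l:ℝ)/Real.exp 1)^l * (m:ℝ)^l := by
      rw [← mul_pow]
      congr 1
      ring
    have h2 : (((l:ℝ)*(m:ℝ))/Real.exp 1)^k * ((m:ℝ)-1)^k = ((k:ℝ)/Real.exp 1)^k * (m:ℝ)^k := by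
      rw [← mul_pow, ← mul_pow]
      congr 1
      rw [hkR]
      ring
    have h3 : (m:ℝ)^l * (m:ℝ)^k = (m:ℝ)^(m*(l-1)+1) * (m:ℝ)^(m-1) := by
      rw [← pow_add, ← pow_add, ← hlmk, hexp1]
    calc (((l:ℝ)*(m:ℝ))/Real.exp 1)^(l*m) * ((m:ℝ)-1)^k
        = (((l:ℝ)*(m:ℝ))/Real.exp 1)^l * ((((l:ℝ)*(m:ℝ))/Real.exp 1)^k * ((m:ℝ)-1)^k) := by
          rw [hlmk, pow_add]; ring
      _ = (((l:ℝ)/Real.exp 1)^l * (m:ℝ)^l) * (((k:ℝ)/Real.exp 1)^k * (m:ℝ)^k) := by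
          rw [h1, h2]
      _ = ((l:ℝ)/Real.exp 1)^l*((k:ℝ)/Real.exp 1)^k*((m:ℝ)^l*(m:ℝ)^k) := by ring
      _ = _ := by rw [h3]
  have h1k : ((m:ℝ)-1)^k = ((m:ℝ)-1)^((m-1)*(l-1)) * ((m:ℝ)-1)^(m-1) := by
    rw [← pow_add, ← hexp2]
  -- main chain
  rw [ge_iff_le, hchoose]
  have step1 : (m:ℝ)^(m*(l-1)+1)/(Real.sqrt l * ((m:ℝ)-1)^((m-1)*(l-1)))
      ≤ Real.sqrt π * (Real.sqrt (2*((l*m:ℕ):ℝ)) * (((l*m:ℕ):ℝ)/Real.exp 1)^(l*m))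
        / ((S₁ * (Real.sqrt (2*(l:ℝ)) * ((l:ℝ)/Real.exp 1)^l))
          * (S₂ * (Real.sqrt (2*(k:ℝ)) * ((k:ℝ)/Real.exp 1)^k))) := by
    rw [div_le_div_iff₀ (by positivity) (by positivity)]
    apply le_of_mul_le_mul_right _ (pow_pos hm1pos k)
    have eqA : (m:ℝ)^(m*(l-1)+1) * ((S₁ * (Real.sqrt (2*(l:ℝ)) * ((l:ℝ)/Real.exp 1)^l))
          * (S₂ * (Real.sqrt (2*(k:ℝ)) * ((k:ℝ)/Real.exp 1)^k))) * ((m:ℝ)-1)^k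
        = (S₁*S₂*Real.sqrt 2*Real.sqrt ((m:ℝ)-1)*((m:ℝ)-1)^(m-1))
          * (Real.sqrt 2*Real.sqrt l*Real.sqrt l*((l:ℝ)/Real.exp 1)^l*((k:ℝ)/Real.exp 1)^k
            *(m:ℝ)^(m*(l-1)+1)*((m:ℝ)-1)^((m-1)*(l-1))) := by
      rw [e2, e3, h1k]
      ring
    have eqB : Real.sqrt π * (Real.sqrt (2*((l*m:ℕ):ℝ)) * (((l*m:ℕ):ℝ)/Real.exp 1)^(l*m))
          * (Real.sqrt l * ((m:ℝ)-1)^((m-1)*(l-1))) * ((m:ℝ)-1)^k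
        = (Real.sqrt π * Real.sqrt m * (m:ℝ)^(m-1))
          * (Real.sqrt 2*Real.sqrt l*Real.sqrt l*((l:ℝ)/Real.exp 1)^l*((k:ℝ)/Real.exp 1)^k
            *(m:ℝ)^(m*(l-1)+1)*((m:ℝ)-1)^((m-1)*(l-1))) := by
      rw [e1, hcastlm]
      calc Real.sqrt π * (Real.sqrt 2*Real.sqrt l*Real.sqrt m * (((l:ℝ)*(m:ℝ))/Real.exp 1)^(l*m))
          * (Real.sqrt l * ((m:ℝ)-1)^((m-1)*(l-1))) * ((m:ℝ)-1)^k
          = (Real.sqrt π * Real.sqrt 2*Real.sqrt l*Real.sqrt m*Real.sqrt l*((m:ℝ)-1)^((m-1)*(l-1)))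
            * ((((l:ℝ)*(m:ℝ))/Real.exp 1)^(l*m) * ((m:ℝ)-1)^k) := by ring
        _ = (Real.sqrt π * Real.sqrt 2*Real.sqrt l*Real.sqrt m*Real.sqrt l*((m:ℝ)-1)^((m-1)*(l-1)))
            * (((l:ℝ)/Real.exp 1)^l*((k:ℝ)/Real.exp 1)^k*((m:ℝ)^(m*(l-1)+1)*(m:ℝ)^(m-1))) := by
            rw [hsplit]
        _ = _ := by ring
    rw [eqA, eqB]
    apply mul_le_mul_of_nonneg_right hS
    positivity
  refine le_trans step1 ?_
  apply div_le_div₀ (by positivity) Flm (by positivity) ?_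
  calc (Nat.factorial l : ℝ)*(Nat.factorial k : ℝ)
      ≤ (S₁ * (Real.sqrt (2*(l:ℝ)) * ((l:ℝ)/Real.exp 1)^l))
        * (S₂ * (Real.sqrt (2*(k:ℝ)) * ((k:ℝ)/Real.exp 1)^k)) :=
    mul_le_mul Fl Fk (le_of_lt hfk0) (by positivity)

/-- Stirling combination bound: for `ℓ ≥ 1`, `m ≥ 2`,
`C(ℓm, ℓ) ≥ m^(m(ℓ−1)+1) / (√ℓ · (m−1)^((m−1)(ℓ−1)))`. -/
theorem stmt4 (l m : ℕ) (hl : 1 ≤ l) (hm : 2 ≤ m) :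
    (Nat.choose (l * m) l : ℝ)
      ≥ (m : ℝ) ^ (m * (l - 1) + 1) /
        (Real.sqrt l * ((m : ℝ) - 1) ^ ((m - 1) * (l - 1))) := by
  rcases eq_or_lt_of_le hl with h1 | hl2
  · -- l = 1
    subst h1
    simp [Nat.choose_one_right, Real.sqrt_one]
  · have hl2 : 2 ≤ l := hl2
    rcases eq_or_lt_of_le hm with h2 | hm3
    · -- m = 2
      subst h2
      apply main_aux l 2 1.84726403 1.84726403 hl2 (le_refl 2)
      · exact le_trans (stirling_anti (by norm_num) hl2) s2_le
      · rw [show l*(2-1) = l by omega]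
        exact le_trans (stirling_anti (by norm_num) hl2) s2_le
      · norm_num
        nlinarith [sqrt_pi_ge, Real.sqrt_nonneg (2:ℝ), Real.sqrt_pos.mpr (by norm_num : (0:ℝ) < 2)]
    · -- m ≥ 3
      have hm3 : 3 ≤ m := hm3
      apply main_aux l m 1.84726403 1.8097 hl2 hm
      · exact le_trans (stirling_anti (by norm_num) hl2) s2_le
      · have h4k : 4 ≤ l*(m-1) := by
          calc 4 = 2*2 := by norm_num
          _ ≤ l*(m-1) := Nat.mul_le_mul hl2 (by omega)
        exact le_trans (stirling_anti (by norm_num) h4k) s4_le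
      · have hc : ((m-1:ℕ):ℝ) = (m:ℝ)-1 := by
          push_cast [Nat.cast_sub (by omega : 1 ≤ m)]
          ring
        have key := epow_le (m-1) (by omega)
        rw [hc, show ((m:ℝ)-1)+1 = (m:ℝ) by ring] at key
        have hm1pos : (0:ℝ) ≤ (m:ℝ)-1 := by
          have : (2:ℝ) ≤ m := by exact_mod_cast hm
          linarith
        have hX : (0:ℝ) ≤ Real.sqrt ((m:ℝ)-1)*((m:ℝ)-1)^(m-1) := by positivity
        have hstep : (1.84726403:ℝ)*1.8097*Real.sqrt 2 ≤ 1.7724*2.7182818283 := by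
          nlinarith [sqrt_two_le, Real.sqrt_nonneg (2:ℝ)]
        have hstep2 : (1.7724:ℝ)*2.7182818283 ≤ Real.sqrt π * Real.exp 1 :=
          mul_le_mul sqrt_pi_ge (le_of_lt Real.exp_one_gt_d9) (by norm_num) (Real.sqrt_nonneg π)
        calc (1.84726403:ℝ)*1.8097*Real.sqrt 2*Real.sqrt ((m:ℝ)-1)*((m:ℝ)-1)^(m-1)
            = ((1.84726403:ℝ)*1.8097*Real.sqrt 2)*(Real.sqrt ((m:ℝ)-1)*((m:ℝ)-1)^(m-1)) := by
              ring
          _ ≤ (Real.sqrt π * Real.exp 1)*(Real.sqrt ((m:ℝ)-1)*((m:ℝ)-1)^(m-1)) :=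
              mul_le_mul_of_nonneg_right (le_trans hstep hstep2) hX
          _ = Real.sqrt π * (Real.exp 1*(Real.sqrt ((m:ℝ)-1)*((m:ℝ)-1)^(m-1))) := by ring
          _ ≤ Real.sqrt π * (Real.sqrt (m:ℝ)*(m:ℝ)^(m-1)) :=
              mul_le_mul_of_nonneg_left key (Real.sqrt_nonneg π)
          _ = Real.sqrt π * Real.sqrt (m:ℝ) * (m:ℝ)^(m-1) := by ring
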